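/- Separation theorem for complete congruences (specialized to EReal^n): Let W ⊆ (EReal^n)^2 be a complete congruence and let s, t ∈ EReal^n be such that (s,t) ∉ W. Then there exists x ∈ EReal^n such that f∖x = g∖x for every (f,g) ∈ W, while s∖x ≠ t∖x. -/

import Mathlib

open scoped Classical

noncomputable section

/-- Vectors of the semimodule `EReal^n` over the completed max-plus
semiring `EReal = ℝ ∪ {±∞}`. -/
abbrev EVec (n : ℕ) := Fin n → EReal

/-- `W ⊆ (EReal^n)² ≅ EReal^{2n}` is a complete subsemimodule (with the
entrywise operations): it is stable under entrywise max, under the entrywise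
addition of any scalar, and under arbitrary (entrywise) suprema. -/
def IsCompleteSubsemimoduleE {n : ℕ} (W : Set (EVec n × EVec n)) : Prop :=
  (∀ p ∈ W, ∀ q ∈ W, p ⊔ q ∈ W) ∧
  (∀ p ∈ W, ∀ lam : EReal,
    ((fun i => p.1 i + lam, fun i => p.2 i + lam) : EVec n × EVec n) ∈ W) ∧
  (∀ Q : Set (EVec n × EVec n), Q ⊆ W → sSup Q ∈ W)

/-- A complete pre-congruence: a complete subsemimodule of `(EReal^n)²`
containing the diagonal and transitive. -/
def IsCompletePrecongruenceE {n : ℕ} (W : Set (EVec n × EVec n)) : Prop :=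
  IsCompleteSubsemimoduleE W ∧ (∀ f : EVec n, (f, f) ∈ W) ∧
    ∀ f g h : EVec n, (f, g) ∈ W → (g, h) ∈ W → (f, h) ∈ W

/-- A complete polar cone: a complete pre-congruence such that `f ≤ g`
implies `(f,g) ∈ W`. -/
def IsCompletePolarConeE {n : ℕ} (W : Set (EVec n × EVec n)) : Prop :=
  IsCompletePrecongruenceE W ∧ ∀ f g : EVec n, f ≤ g → (f, g) ∈ W

/-- A complete congruence: a symmetric complete pre-congruence. -/
def IsCompleteCongruenceE {n : ℕ} (W : Set (EVec n × EVec n)) : Prop :=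
  IsCompletePrecongruenceE W ∧ ∀ f g : EVec n, (f, g) ∈ W → (g, f) ∈ W

/-- The entrywise supremum `ē(g) = sSup { f | (f,g) ∈ W }`. -/
def ebarE {n : ℕ} (W : Set (EVec n × EVec n)) (g : EVec n) : EVec n :=
  sSup { f : EVec n | (f, g) ∈ W }

/-- The residuation `u∖x = sSup { λ | ∀ i, u_i + λ ≤ x_i }` in `EReal`. -/
def eresE {n : ℕ} (u x : EVec n) : EReal :=
  sSup { lam : EReal | ∀ i, u i + lam ≤ x i }

section helpers

variable {n : ℕ}

/-- Attainment: the residuation supremum is attained. -/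
lemma eres_attain (u x : EVec n) (i : Fin n) : u i + eresE u x ≤ x i := by
  set S : Set EReal := { lam : EReal | ∀ i, u i + lam ≤ x i } with hS
  by_cases hb : sSup S = ⊥
  · rw [eresE, ← hS, hb, EReal.add_bot]; exact bot_le
  · rcases eq_or_ne (u i) ⊥ with hu | hu0
    · rw [hu, EReal.bot_add]; exact bot_le
    rcases eq_or_ne (u i) ⊤ with hu | hu1
    · have : ∃ lam ∈ S, lam ≠ ⊥ := by
        by_contra hc
        push_neg at hc
        exact hb (le_bot_iff.mp (sSup_le fun lam hl => le_bot_iff.mpr (hc lam hl)))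
      obtain ⟨lam, hlam, hlb⟩ := this
      have := hlam i
      rw [hu, EReal.top_add_of_ne_bot hlb] at this
      exact le_trans le_top this
    · set r : ℝ := (u i).toReal with hr
      have hu : u i = (r : EReal) := (EReal.coe_toReal hu1 hu0).symm
      rw [hu, add_comm]
      rw [← EReal.le_sub_iff_add_le (Or.inl (EReal.coe_ne_bot r))
        (Or.inl (EReal.coe_ne_top r))]
      refine sSup_le fun lam hl => ?_
      rw [EReal.le_sub_iff_add_le (Or.inl (EReal.coe_ne_bot r))
        (Or.inl (EReal.coe_ne_top r)), add_comm, ← hu]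
      exact hl i

lemma eres_nonneg {u x : EVec n} (h : u ≤ x) : (0 : EReal) ≤ eresE u x :=
  le_sSup fun i => by rw [add_zero]; exact h i

end helpers

/-- **Separation theorem for complete congruences** (Theorem 3.4 of the paper,
specialized to `X = EReal^n`): if `W` is a complete congruence and
`(s,t) ∉ W`, then there is `x` with `f∖x = g∖x` for all `(f,g) ∈ W`, while
`s∖x ≠ t∖x`. -/
theorem separation_complete_congruence (n : ℕ) (W : Set (EVec n × EVec n))
    (hW : IsCompleteCongruenceE W) (s t : EVec n) (hst : (s, t) ∉ W) :
    ∃ x : EVec n,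
      (∀ p ∈ W, eresE p.1 x = eresE p.2 x) ∧
      eresE s x ≠ eresE t x := by
  obtain ⟨⟨⟨hsup, hscal, hsSup⟩, hdiag, htrans⟩, hsymm⟩ := hW
  -- (ebar g, g) ∈ W
  have hebar : ∀ g : EVec n, (ebarE W g, g) ∈ W := by
    intro g
    have hQ : {p : EVec n × EVec n | p ∈ W ∧ p.2 = g} ⊆ W := fun p hp => hp.1
    have hm := hsSup _ hQ
    have h1 : (sSup {p : EVec n × EVec n | p ∈ W ∧ p.2 = g}).1 = ebarE W g := by
      rw [Prod.fst_sSup, ebarE]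
      congr 1
      ext f
      constructor
      · rintro ⟨p, ⟨hpW, hp2⟩, rfl⟩; rwa [← hp2]
      · intro hf; exact ⟨(f, g), ⟨hf, rfl⟩, rfl⟩
    have h2 : (sSup {p : EVec n × EVec n | p ∈ W ∧ p.2 = g}).2 = g := by
      rw [Prod.snd_sSup]
      have : Prod.snd '' {p : EVec n × EVec n | p ∈ W ∧ p.2 = g} = {g} := by
        ext y
        constructor
        · rintro ⟨p, ⟨_, hp2⟩, rfl⟩; exact hp2
        · intro hy
          have hy' : y = g := hy
          subst hy'
          exact ⟨(y, y), ⟨hdiag y, rfl⟩, rfl⟩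
      rw [this, sSup_singleton]
    have : sSup {p : EVec n × EVec n | p ∈ W ∧ p.2 = g} = (ebarE W g, g) :=
      Prod.ext h1 h2
    rwa [this] at hm
  -- key property of x = ebar g
  have hmax : ∀ g h : EVec n, (h, ebarE W g) ∈ W → h ≤ ebarE W g := by
    intro g h hh
    exact le_sSup (htrans h (ebarE W g) g hh (hebar g))
  -- one-sided inclusion lemma
  have hincl : ∀ g₀ f g : EVec n, (f, g) ∈ W → ∀ lam : EReal,
      (∀ i, f i + lam ≤ ebarE W g₀ i) → (∀ i, g i + lam ≤ ebarE W g₀ i) := by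
    intro g₀ f g hfg lam hle
    set x := ebarE W g₀ with hx
    have h1 := hscal _ hfg lam
    have h2 := hsup _ h1 _ (hdiag x)
    have hfx : ((fun i => f i + lam) ⊔ x : EVec n) = x := by
      exact sup_eq_right.mpr (fun i => hle i)
    have h3 : ((x, (fun i => g i + lam) ⊔ x) : EVec n × EVec n) ∈ W := by
      have : (((fun i => f i + lam) ⊔ x, (fun i => g i + lam) ⊔ x) :
          EVec n × EVec n) ∈ W := h2
      rwa [hfx] at this
    have h4 := hmax g₀ _ (hsymm _ _ h3)
    intro i
    exact le_trans (le_sup_left : (fun i => g i + lam) i ≤ _) (h4 i)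
  -- f∖x = g∖x for x = ebar g₀ and (f,g) ∈ W
  have heq : ∀ g₀ : EVec n, ∀ p ∈ W, eresE p.1 (ebarE W g₀) = eresE p.2 (ebarE W g₀) := by
    intro g₀ p hp
    rw [eresE, eresE]
    congr 1
    ext lam
    exact ⟨hincl g₀ p.1 p.2 hp lam, hincl g₀ p.2 p.1 (hsymm _ _ hp) lam⟩
  -- main argument
  by_contra hc
  push_neg at hc
  have H1 := hc (ebarE W s) (heq s)
  have H2 := hc (ebarE W t) (heq t)
  -- s ≤ ebar t
  have hst2 : s ≤ ebarE W t := by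
    intro i
    have h0 : (0 : EReal) ≤ eresE s (ebarE W t) := by
      rw [H2]
      exact eres_nonneg (le_sSup (hdiag t))
    calc s i = s i + 0 := (add_zero _).symm
      _ ≤ s i + eresE s (ebarE W t) := add_le_add_right h0 _
      _ ≤ ebarE W t i := eres_attain s (ebarE W t) i
  have hts1 : t ≤ ebarE W s := by
    intro i
    have h0 : (0 : EReal) ≤ eresE t (ebarE W s) := by
      rw [← H1]
      exact eres_nonneg (le_sSup (hdiag s))
    calc t i = t i + 0 := (add_zero _).symm
      _ ≤ t i + eresE t (ebarE W s) := add_le_add_right h0 _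
      _ ≤ ebarE W s i := eres_attain t (ebarE W s) i
  -- derive (s,t) ∈ W
  have hA : ((ebarE W t, s ⊔ t) : EVec n × EVec n) ∈ W := by
    have := hsup _ (hdiag s) _ (hebar t)
    have he : (s ⊔ ebarE W t : EVec n) = ebarE W t := sup_eq_right.mpr hst2
    have h' : ((s ⊔ ebarE W t, s ⊔ t) : EVec n × EVec n) ∈ W := this
    rwa [he] at h'
  have hB : ((ebarE W s, t ⊔ s) : EVec n × EVec n) ∈ W := by
    have := hsup _ (hdiag t) _ (hebar s)
    have he : (t ⊔ ebarE W s : EVec n) = ebarE W s := sup_eq_right.mpr hts1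
    have h' : ((t ⊔ ebarE W s, t ⊔ s) : EVec n × EVec n) ∈ W := this
    rwa [he] at h'
  have hsW : (s, s ⊔ t) ∈ W := by
    have h1 : (s, ebarE W s) ∈ W := hsymm _ _ (hebar s)
    have h2 : (ebarE W s, s ⊔ t) ∈ W := by rwa [sup_comm t s] at hB
    exact htrans _ _ _ h1 h2
  have htW : (s ⊔ t, t) ∈ W := by
    have h1 : (t, ebarE W t) ∈ W := hsymm _ _ (hebar t)
    exact hsymm _ _ (htrans _ _ _ h1 hA)
  exact hst (htrans _ _ _ hsW htW)
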